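/- For every integer n ≥ 2, Σ_{k=1}^{n} (-1)^k · (k-1)! · S(n,k) = 0, and for n = 1 this sum equals -1. -/

import Mathlib

open Finset

/-- Stirling numbers of the second kind. -/
def S : ℕ → ℕ → ℕ
  | 0, 0 => 1
  | 0, _ + 1 => 0
  | _ + 1, 0 => 0
  | n + 1, k + 1 => (k + 1) * S n (k + 1) + S n k

/-- Ordered Bell (Fubini) numbers. -/
def B (n : ℕ) : ℕ := ∑ k ∈ range (n + 1), k.factorial * S n k

lemma S_eq_zero_of_lt : ∀ m k : ℕ, m < k → S m k = 0 := by
  intro m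
  induction m with
  | zero => intro k hk; cases k with
    | zero => omega
    | succ j => rfl
  | succ n ih =>
    intro k hk
    cases k with
    | zero => omega
    | succ j =>
      show (j + 1) * S n (j + 1) + S n j = 0
      rw [ih (j+1) (by omega), ih j (by omega)]
      ring

lemma S_zero_eq (m : ℕ) (hm : 1 ≤ m) : S m 0 = 0 := by
  cases m with
  | zero => omega
  | succ n => rfl

theorem stmt8 :
    (∀ n : ℕ, 2 ≤ n → ∑ k ∈ Icc 1 n, (-1 : ℤ) ^ k * (k - 1).factorial * S n k = 0) ∧
    ∑ k ∈ Icc 1 1, (-1 : ℤ) ^ k * (k - 1).factorial * S 1 k = -1 := by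
  constructor
  · intro n hn
    obtain ⟨m, rfl⟩ : ∃ m, n = m + 1 := ⟨n - 1, by omega⟩
    have hm : 1 ≤ m := by omega
    set h : ℕ → ℤ := fun k => (-1 : ℤ) ^ k * k.factorial * S m k with hh
    set A : ℤ := ∑ k ∈ range (m + 2), h k with hA
    have step1 : ∑ k ∈ Icc 1 (m + 1), (-1 : ℤ) ^ k * (k - 1).factorial * S (m + 1) k
        = ∑ i ∈ range (m + 1), (-1 : ℤ) ^ (i + 1) * i.factorial * S (m + 1) (i + 1) := by
      rw [← Finset.Ico_add_one_right_eq_Icc, Finset.sum_Ico_eq_sum_range]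
      apply Finset.sum_congr (by congr 1)
      intro i _
      have : 1 + i - 1 = i := by omega
      rw [this, add_comm 1 i]
    rw [step1]
    have step2 : ∀ i ∈ range (m + 1),
        (-1 : ℤ) ^ (i + 1) * i.factorial * S (m + 1) (i + 1)
        = h (i + 1) - h i := by
      intro i _
      show (-1 : ℤ) ^ (i + 1) * i.factorial * ((i + 1) * S m (i + 1) + S m i) = _
      simp only [hh, Nat.factorial_succ, pow_succ]
      push_cast
      ring
    rw [Finset.sum_congr rfl step2, Finset.sum_sub_distrib]
    have e1 : ∑ i ∈ range (m + 1), h (i + 1) = A - h 0 := by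
      rw [hA, Finset.sum_range_succ' h (m + 1)]
      ring
    have e2 : ∑ i ∈ range (m + 1), h i = A - h (m + 1) := by
      rw [hA, Finset.sum_range_succ h (m + 1)]
      ring
    have h0 : h 0 = 0 := by
      simp [hh, S_zero_eq m hm]
    have hm1 : h (m + 1) = 0 := by
      simp [hh, S_eq_zero_of_lt m (m + 1) (by omega)]
    rw [e1, e2, h0, hm1]
    ring
  · decide
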